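/- Let k ∈ ℕ⁺ and let f : ℍ → ℂ transform with weight 2k−1 and character χ₋₄ under Γ₀(4), i.e. for every [[a,b],[c,d]] ∈ Γ₀(4) and all τ ∈ ℍ, f((aτ+b)/(cτ+d)) = χ₋₄(d)(cτ+d)^{2k−1} f(τ). Let p be an odd prime. Then for all τ ∈ ℍ, f(pτ/(4τ+1)) = χ₋₄(p)·p^{1−2k}·(4τ+1)^{2k−1}·f((4τ − p_χ + 1)/(4p)). -/

import Mathlib

open Complex UpperHalfPlane Filter Matrix CongruenceSubgroup
open scoped Real MatrixGroups Manifold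

noncomputable section

/-- The primitive Dirichlet character mod 4: `1` on `1 mod 4`, `-1` on `3 mod 4`, `0` on evens. -/
def chi4 (n : ℤ) : ℤ := if n % 4 = 1 then 1 else if n % 4 = 3 then -1 else 0

lemma moebius_im_pos (a b c d : ℝ) (h : 0 < a * d - b * c) {z : ℂ} (hz : 0 < z.im) :
    0 < (((a : ℂ) * z + b) / ((c : ℂ) * z + d)).im := by
  have hden : ((c : ℂ) * z + d) ≠ 0 := by
    intro h0
    have him : c * z.im = 0 := by
      have := congrArg Complex.im h0
      simpa using this
    have hc : c = 0 := by
      rcases mul_eq_zero.mp him with hc | hzim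
      · exact hc
      · exact absurd hzim hz.ne'
    have hd : d = 0 := by
      have := congrArg Complex.re h0
      simpa [hc] using this
    rw [hc, hd] at h
    simp at h
  have him : (((a : ℂ) * z + b) / ((c : ℂ) * z + d)).im
      = (a * d - b * c) * z.im / Complex.normSq ((c : ℂ) * z + d) := by
    rw [Complex.div_im]
    simp only [Complex.add_im, Complex.add_re, Complex.mul_im, Complex.mul_re,
      Complex.ofReal_re, Complex.ofReal_im, Complex.normSq_apply]
    ring
  rw [him]
  exact div_pos (mul_pos h hz) (Complex.normSq_pos.mpr hden)

/-- The point `(aτ+b)/(cτ+d)` of `ℍ`, for a real matrix of positive determinant. -/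
def mkM (a b c d : ℝ) (h : 0 < a * d - b * c) (τ : ℍ) : ℍ :=
  ⟨((a : ℂ) * τ + b) / ((c : ℂ) * τ + d), moebius_im_pos a b c d h τ.im_pos⟩

theorem expansion_at_cusp_one_fourth (k : ℕ) (hk : 1 ≤ k) (f : ℍ → ℂ)
    (hf : ∀ γ : Gamma0 4, ∀ τ : ℍ,
      f ((γ : SL(2, ℤ)) • τ) =
        (chi4 ((γ : SL(2, ℤ)) 1 1) : ℂ) *
          (((γ : SL(2, ℤ)) 1 0 : ℂ) * τ + ((γ : SL(2, ℤ)) 1 1 : ℂ)) ^ (2 * k - 1) * f τ)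
    (p : ℕ) (hp : p.Prime) (hodd : Odd p) :
    ∀ τ : ℍ,
      f (mkM p 0 4 1 (by simp; exact_mod_cast hp.pos) τ) =
        (chi4 p : ℂ) * (p : ℂ) ^ (1 - 2 * (k : ℤ)) * (4 * (τ : ℂ) + 1) ^ (2 * k - 1) *
          f (mkM 4 (1 - ((chi4 p * p : ℤ) : ℝ)) 0 (4 * p)
              (by
                have hpr : (0 : ℝ) < (p : ℝ) := by exact_mod_cast hp.pos
                nlinarith) τ) := by

  intro τ
  classical
  set χ : ℤ := chi4 p with hχdef
  have hpne : (p : ℂ) ≠ 0 := by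
    exact_mod_cast Nat.cast_ne_zero.mpr hp.pos.ne'
  -- p mod 4 is 1 or 3
  have hp4 : (p : ℤ) % 4 = 1 ∨ (p : ℤ) % 4 = 3 := by
    rcases hodd with ⟨m, hm⟩
    omega
  have hχ1 : χ = 1 ∨ χ = -1 := by
    rcases hp4 with h | h
    · left; simp [hχdef, chi4, h]
    · right; simp [hχdef, chi4, h]
  have hχ2 : χ * χ = 1 := by rcases hχ1 with h | h <;> simp [h]
  obtain ⟨b, hb⟩ : (4 : ℤ) ∣ χ * p - 1 := by
    rcases hp4 with h | h
    · have : χ = 1 := by simp [hχdef, chi4, h]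
      rw [this]; omega
    · have : χ = -1 := by simp [hχdef, chi4, h]
      rw [this]; omega
  have hdet : Matrix.det !![(p : ℤ), b; 4, χ] = 1 := by
    rw [Matrix.det_fin_two_of]
    have hb' : (p:ℤ) * χ - 1 = 4 * b := by rw [mul_comm]; exact hb
    omega
  set g : SL(2, ℤ) := ⟨!![(p : ℤ), b; 4, χ], hdet⟩ with hgdef
  have hg00 : g 0 0 = (p : ℤ) := rfl
  have hg01 : g 0 1 = b := rfl
  have hg10 : g 1 0 = (4 : ℤ) := rfl
  have hg11 : g 1 1 = χ := rfl
  have hmem : g ∈ Gamma0 4 := by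
    rw [Gamma0_mem, hg10]; decide
  set γ : Gamma0 4 := ⟨g, hmem⟩ with hγdef
  set σ : ℍ := mkM 4 (1 - ((chi4 p * p : ℤ) : ℝ)) 0 (4 * p)
      (by
        have hpr : (0 : ℝ) < (p : ℝ) := by exact_mod_cast hp.pos
        nlinarith) τ with hσdef
  have hσc : (σ : ℂ) = (4 * (τ : ℂ) + (1 - (χ : ℂ) * p)) / (4 * p) := by
    show ((4 : ℝ) * (τ : ℂ) + ((1 - ((chi4 p * p : ℤ) : ℝ)) : ℝ)) /
        (((0 : ℝ) : ℂ) * τ + ((4 * p : ℝ) : ℂ)) = _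
    push_cast
    rw [← hχdef]
    ring_nf
  -- 4σ + χ = (4τ+1)/p
  have hden : 4 * (σ : ℂ) + (χ : ℂ) = (4 * (τ : ℂ) + 1) / p := by
    rw [hσc]
    have h4p : (4 : ℂ) * p ≠ 0 := by simpa using hpne
    field_simp
    ring_nf
  have h4τ1 : (4 : ℂ) * (τ : ℂ) + 1 ≠ 0 := by
    intro h0
    have := congrArg Complex.im h0
    simp at this
    exact absurd this τ.im_ne_zero
  -- the action identity
  have hact : g • σ = mkM p 0 4 1 (by simp; exact_mod_cast hp.pos) τ := by
    ext1
    rw [UpperHalfPlane.specialLinearGroup_apply]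
    show (((g 0 0 : ℤ) : ℝ) * (σ : ℂ) + ((g 0 1 : ℤ) : ℝ)) /
        (((g 1 0 : ℤ) : ℝ) * (σ : ℂ) + ((g 1 1 : ℤ) : ℝ)) = _
    rw [hg00, hg01, hg10, hg11]
    have hnum : ((p : ℤ) : ℝ) * (σ : ℂ) + ((b : ℤ) : ℝ) = (τ : ℂ) := by
      have hbc : ((b : ℤ) : ℂ) = ((χ : ℂ) * p - 1) / 4 := by
        have h4 := congrArg (fun x : ℤ => (x : ℂ)) hb
        push_cast at h4
        field_simp
        linear_combination -h4
      push_cast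
      push_cast at hbc
      rw [hbc, hσc]
      field_simp
      ring
    have hden' : ((4 : ℤ) : ℝ) * (σ : ℂ) + ((χ : ℤ) : ℝ) = (4 * (τ : ℂ) + 1) / p := by
      push_cast
      exact_mod_cast hden
    rw [hnum, hden']
    show _ = (((p : ℝ) : ℂ) * (τ : ℂ) + ((0 : ℝ) : ℂ)) / (((4 : ℝ) : ℂ) * τ + ((1 : ℝ) : ℂ))
    push_cast
    rw [div_div_eq_mul_div]
    ring_nf
  have key := hf γ σ
  have hγg : (γ : SL(2, ℤ)) = g := rfl
  rw [hγg, hact] at key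
  rw [key]
  have hchi : chi4 (g 1 1) = chi4 p := by
    have h1 : chi4 1 = 1 := by decide
    have hm1 : chi4 (-1) = -1 := by decide
    rcases hχ1 with h | h
    · rw [hg11, h, h1, ← hχdef]; exact h.symm
    · rw [hg11, h, hm1, ← hχdef]; exact h.symm
  have hden'' : ((g 1 0 : ℤ) : ℂ) * (σ : ℂ) + ((g 1 1 : ℤ) : ℂ) = (4 * (τ : ℂ) + 1) / p := by
    rw [hg10, hg11]; push_cast; exact_mod_cast hden
  rw [hchi, hden'']
  have hz : (p : ℂ) ^ (1 - 2 * (k : ℤ)) = ((p : ℂ) ^ (2 * k - 1 : ℕ))⁻¹ := by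
    have he : (1 - 2 * (k : ℤ)) = -((2 * k - 1 : ℕ) : ℤ) := by
      have : (2 * k - 1 : ℕ) = 2 * k - 1 := rfl
      omega
    rw [he, _root_.zpow_neg, zpow_natCast]
  rw [div_pow, hz]
  have hpow : (p : ℂ) ^ (2 * k - 1 : ℕ) ≠ 0 := pow_ne_zero _ hpne
  field_simp
  rw [hχdef]
  ring
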